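/- Let F be a complete discretely valued field of characteristic 2 with finite residue field, valuation v and valuation ring O, and let a ∈ O. If c ∈ F× has even valuation v(c), then the equation x² + xy + ay² = c has a solution x, y ∈ F. -/

import Mathlib

open IsLocalRing Polynomial

lemma asroot {O : Type*} [CommRing O] [IsLocalRing O]
    [IsAdicComplete (IsLocalRing.maximalIdeal O) O] (h2 : (2:O) = 0)
    (b : O) (r : O) (hb : r^2 + r + b ∈ IsLocalRing.maximalIdeal O) :
    ∃ z : O, z^2 + z + b = 0 := by
  have H : HenselianRing O (maximalIdeal O) := inferInstance
  obtain ⟨z, hz, -⟩ := H.is_henselian (X^2 + (X + C b)) (by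
      apply monic_X_pow_add
      refine lt_of_le_of_lt (degree_add_le _ _) ?_
      refine max_lt ?_ ?_
      · rw [degree_X]; decide
      · exact lt_of_le_of_lt degree_C_le (by decide)) r (by
      simp only [eval_add, eval_pow, eval_X, eval_C]
      rwa [← add_assoc]) (by
      simp [derivative_add, derivative_X_pow, h2]
      have h2q := congrArg (Ideal.Quotient.mk (maximalIdeal O)) h2
      rw [map_ofNat, map_zero] at h2q
      rw [one_add_one_eq_two, h2q]
      simp)
  refine ⟨z, ?_⟩
  have := hz
  simp only [IsRoot, eval_add, eval_pow, eval_X, eval_C] at this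
  linear_combination this

theorem stmt10 (O : Type*) [CommRing O] [IsDomain O] [IsDiscreteValuationRing O]
    [IsAdicComplete (IsLocalRing.maximalIdeal O) O]
    [Finite (IsLocalRing.ResidueField O)]
    (K : Type*) [Field K] [Algebra O K] [IsFractionRing O K] [CharP K 2]
    (π : O) (hπ : Irreducible π) (a : O) (c : K) (hc : c ≠ 0)
    (heven : ∃ (u : Oˣ) (n : ℤ), c = algebraMap O K u * (algebraMap O K π)^(2*n)) :
    ∃ x y : K, x^2 + x*y + algebraMap O K a * y^2 = c := by
  set φ := algebraMap O K with hφ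
  have hinj : Function.Injective φ := IsFractionRing.injective O K
  have h2K : (2:K) = 0 := CharP.cast_eq_zero K 2
  have h2O : (2:O) = 0 := by
    apply hinj; rw [map_ofNat, map_zero]; exact h2K
  set k := IsLocalRing.ResidueField O with hk
  set res := IsLocalRing.residue O with hres
  have h2k : (2:k) = 0 := by
    have : res 2 = res 0 := by rw [h2O]
    rw [map_ofNat, map_zero] at this
    exact this
  by_cases hAS : ∃ r : O, r^2 + r + a ∈ IsLocalRing.maximalIdeal O
  · -- isotropic case: a = t^2 + t, explicit solution for any c
    obtain ⟨r, hr⟩ := hAS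
    obtain ⟨t, ht⟩ := asroot h2O a r hr
    have hT : (φ t)^2 + φ t + φ a = 0 := by
      have := congrArg φ ht
      push_cast [map_add, map_pow, map_zero] at this
      linear_combination this
    refine ⟨c + φ t * (c+1), c + 1, ?_⟩
    linear_combination (c+1)^2 * hT + (c^2 + c * φ t * (c+1)) * h2K
  · push_neg at hAS
    obtain ⟨u, n, hcu⟩ := heven
    have ha0 : res a ≠ 0 := by
      intro h
      exact hAS 0 (by simpa using Ideal.Quotient.eq_zero_iff_mem.mp h)
    have hu0 : res (u:O) ≠ 0 := by
      intro h
      have : (u:O) ∈ IsLocalRing.maximalIdeal O := by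
        rwa [← Ideal.Quotient.eq_zero_iff_mem]
      exact (IsLocalRing.mem_maximalIdeal _).mp this u.isUnit
    have hsq : Function.Surjective (fun x : k => x * x) := by
      have hinj2 : Function.Injective (fun x : k => x * x) := by
        intro x y hxy
        have h1 : (x - y)^2 = 0 := by
          dsimp at hxy; linear_combination hxy + (y^2 - x*y) * h2k
        have h2 := pow_eq_zero_iff (n := 2) (by norm_num) |>.mp h1
        exact sub_eq_zero.mp h2
      exact Finite.surjective_of_injective hinj2
    obtain ⟨w, hw⟩ := hsq (res a * (res u)⁻¹)
    have hw2 : w * w = res a * (res u)⁻¹ := hw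
    obtain ⟨v, hv⟩ := Ideal.Quotient.mk_surjective (I := IsLocalRing.maximalIdeal O) w
    have hv' : res v = w := hv
    have hw0 : w ≠ 0 := by
      intro h
      have hne : res a * (res u)⁻¹ ≠ 0 := mul_ne_zero ha0 (inv_ne_zero hu0)
      exact hne (by rw [← hw2, h, mul_zero])
    have hbm : (a + u * v^2 : O) ∈ IsLocalRing.maximalIdeal O := by
      rw [← Ideal.Quotient.eq_zero_iff_mem]
      show res (a + u * v^2) = 0
      have h3 : res (a + u * v^2) = res a + res u * (res v * res v) := by
        push_cast [map_add, map_mul, map_pow]; ring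
      rw [h3, hv', hw2, mul_comm (res a), mul_inv_cancel_left₀ hu0]
      linear_combination res a * h2k
    obtain ⟨z, hz⟩ := asroot h2O (a + u * v^2) 0 (by simpa using hbm)
    have hzK : (φ z)^2 + φ z + φ a + φ u * (φ v)^2 = 0 := by
      have := congrArg φ hz
      push_cast [map_add, map_pow, map_mul, map_zero] at this
      linear_combination this
    have hv0 : φ v ≠ 0 := by
      intro h
      have : v = 0 := hinj (by simpa using h)
      exact hw0 (by rw [← hv', this, map_zero])
    have hP0 : φ π ≠ 0 := fun h => hπ.ne_zero (hinj (by simpa using h))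
    set P := φ π ^ n with hPdef
    have hvv : φ v * (φ v)⁻¹ = 1 := mul_inv_cancel₀ hv0
    refine ⟨φ z * (P * (φ v)⁻¹), P * (φ v)⁻¹, ?_⟩
    rw [hcu]
    have hPP : (φ π)^(2*n) = P * P := by
      rw [two_mul, zpow_add₀ hP0]
    rw [hPP]
    linear_combination (P^2 * ((φ v)⁻¹)^2) * hzK +
      (-(φ (u:O) * P^2) * (φ v * (φ v)⁻¹ + 1)) * hvv + (-(φ (u:O) * P^2)) * h2K
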